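/- Under the DCSBM population setup with simple eigenvalues of D̃P̃D̃, every row of X is nonzero, and the row-normalized matrix X* satisfies: for any two nodes i and j with g_i = g_j, the i-th and j-th rows of X* are equal. -/
import Mathlib


open Matrix BigOperators MeasureTheory ProbabilityTheory

noncomputable section

namespace DCSBM

variable {n K : ℕ}

/-- The `n × K` membership matrix `Z` with `Z i k = 1` iff node `i` is in community `k`. -/
def Zmat (g : Fin n → Fin K) : Matrix (Fin n) (Fin K) ℝ :=
  Matrix.of fun i k => if g i = k then (1 : ℝ) else 0

/-- The population expectation matrix `Ω = Θ Z P Zᵀ Θ`. -/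
def Omega (g : Fin n → Fin K) (θ : Fin n → ℝ) (P : Matrix (Fin K) (Fin K) ℝ) :
    Matrix (Fin n) (Fin n) ℝ :=
  Matrix.diagonal θ * Zmat g * P * (Zmat g)ᵀ * Matrix.diagonal θ

/-- Expected degrees `𝒟_ii = ∑_j Ω_ij`. -/
def Dvec (g : Fin n → Fin K) (θ : Fin n → ℝ) (P : Matrix (Fin K) (Fin K) ℝ) : Fin n → ℝ :=
  fun i => ∑ j, Omega g θ P i j

/-- The regularized population Laplacian `𝓛_δ = 𝒟_δ^{-1/2} Ω 𝒟_δ^{-1/2}`. -/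
def Ldelta (g : Fin n → Fin K) (θ : Fin n → ℝ) (P : Matrix (Fin K) (Fin K) ℝ) (δ d : ℝ) :
    Matrix (Fin n) (Fin n) ℝ :=
  Matrix.diagonal (fun i => (Real.sqrt (Dvec g θ P i + δ * d))⁻¹) * Omega g θ P *
    Matrix.diagonal (fun i => (Real.sqrt (Dvec g θ P i + δ * d))⁻¹)

/-- `θ^δ_i = θ_i 𝒟_ii / (𝒟_ii + δ d)`. -/
def thetaDelta (g : Fin n → Fin K) (θ : Fin n → ℝ) (P : Matrix (Fin K) (Fin K) ℝ) (δ d : ℝ) :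
    Fin n → ℝ :=
  fun i => θ i * Dvec g θ P i / (Dvec g θ P i + δ * d)

/-- `θ̃_i = √(θ^δ_i)`. -/
def thetaTilde (g : Fin n → Fin K) (θ : Fin n → ℝ) (P : Matrix (Fin K) (Fin K) ℝ) (δ d : ℝ) :
    Fin n → ℝ :=
  fun i => Real.sqrt (thetaDelta g θ P δ d i)

/-- `θ̃^{(k)}_i = θ̃_i · 1{g i = k}`. -/
def thetaTildeK (g : Fin n → Fin K) (θ : Fin n → ℝ) (P : Matrix (Fin K) (Fin K) ℝ) (δ d : ℝ)
    (k : Fin K) : Fin n → ℝ :=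
  fun i => if g i = k then thetaTilde g θ P δ d i else 0

/-- Euclidean norm of a vector. -/
def normE {m : ℕ} (v : Fin m → ℝ) : ℝ := Real.sqrt (∑ i, v i ^ 2)

/-- Row sums of `Q = P Zᵀ Θ`, the diagonal entries of `D_P`. -/
def DPvec (g : Fin n → Fin K) (θ : Fin n → ℝ) (P : Matrix (Fin K) (Fin K) ℝ) : Fin K → ℝ :=
  fun k => ∑ j, (P * (Zmat g)ᵀ * Matrix.diagonal θ) k j

/-- `P̃ = D_P^{-1/2} P D_P^{-1/2}`. -/
def Ptilde (g : Fin n → Fin K) (θ : Fin n → ℝ) (P : Matrix (Fin K) (Fin K) ℝ) :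
    Matrix (Fin K) (Fin K) ℝ :=
  Matrix.diagonal (fun k => (Real.sqrt (DPvec g θ P k))⁻¹) * P *
    Matrix.diagonal (fun k => (Real.sqrt (DPvec g θ P k))⁻¹)

/-- `D̃ = diag(‖θ̃^{(k)}‖ / ‖θ̃‖)`. -/
def Dtilde (g : Fin n → Fin K) (θ : Fin n → ℝ) (P : Matrix (Fin K) (Fin K) ℝ) (δ d : ℝ) :
    Matrix (Fin K) (Fin K) ℝ :=
  Matrix.diagonal fun k => normE (thetaTildeK g θ P δ d k) / normE (thetaTilde g θ P δ d)

/-- `Γ̃`, the `n × K` matrix whose `k`-th column is `θ̃^{(k)} / ‖θ̃^{(k)}‖`. -/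
def Gamma (g : Fin n → Fin K) (θ : Fin n → ℝ) (P : Matrix (Fin K) (Fin K) ℝ) (δ d : ℝ) :
    Matrix (Fin n) (Fin K) ℝ :=
  Matrix.of fun i k => thetaTildeK g θ P δ d k i / normE (thetaTildeK g θ P δ d k)


lemma Omega_apply {n K : ℕ} (g : Fin n → Fin K) (θ : Fin n → ℝ) (P : Matrix (Fin K) (Fin K) ℝ)
    (i j : Fin n) : Omega g θ P i j = θ i * P (g i) (g j) * θ j := by
  unfold Omega Zmat
  simp [Matrix.mul_apply, Matrix.diagonal_apply, Finset.sum_ite_eq, Finset.sum_ite_eq', ite_mul, mul_ite,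
    Finset.mul_sum, Finset.sum_mul]
  rw [Finset.sum_comm]
  simp [Finset.sum_ite_eq, Finset.sum_ite_eq']

lemma PZT_apply {n K : ℕ} (g : Fin n → Fin K) (θ : Fin n → ℝ) (P : Matrix (Fin K) (Fin K) ℝ)
    (k : Fin K) (j : Fin n) : (P * (Zmat g)ᵀ * Matrix.diagonal θ) k j = P k (g j) * θ j := by
  unfold Zmat
  simp [Matrix.mul_apply, Matrix.diagonal_apply, Finset.sum_ite_eq, Finset.sum_ite_eq', ite_mul, mul_ite]

lemma normE_eq_zero_iff {m : ℕ} (v : Fin m → ℝ) : normE v = 0 ↔ v = 0 := by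
  unfold normE
  rw [Real.sqrt_eq_zero (by positivity)]
  constructor
  · intro h; funext i
    have := (Finset.sum_eq_zero_iff_of_nonneg (fun i _ => sq_nonneg (v i))).1 h i (Finset.mem_univ i)
    exact pow_eq_zero_iff (by norm_num) |>.1 this
  · intro h; simp [h]

lemma normE_smul {m : ℕ} (c : ℝ) (v : Fin m → ℝ) :
    normE (fun i => c * v i) = |c| * normE v := by
  unfold normE
  rw [← Real.sqrt_sq_eq_abs, ← Real.sqrt_mul (sq_nonneg c)]
  congr 1
  rw [Finset.mul_sum]
  exact Finset.sum_congr rfl fun i _ => by ring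

/-- Every row of `X` is nonzero, and the row-normalized matrix `X*` has equal rows for
nodes in the same community. -/
theorem stmt7 {n K : ℕ} (hK : 1 ≤ K) (hKn : K ≤ n)
    (g : Fin n → Fin K) (hg : Function.Surjective g)
    (θ : Fin n → ℝ) (hθ : ∀ i, 0 < θ i)
    (P : Matrix (Fin K) (Fin K) ℝ) (hPsymm : P.IsSymm) (hPdet : P.det ≠ 0)
    (hPnn : ∀ k l, 0 ≤ P k l)
    (δ d : ℝ) (hδ : 0 < δ) (hd : 0 < d)
    (lam : Fin K → ℝ) (a : Fin K → Fin K → ℝ)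
    (heig : ∀ j, (Dtilde g θ P δ d * Ptilde g θ P * Dtilde g θ P δ d) *ᵥ a j =
      (lam j / (normE (thetaTilde g θ P δ d)) ^ 2) • a j)
    (haunit : ∀ j, normE (a j) = 1)
    (hdesc : ∀ j j' : Fin K, j ≤ j' → |lam j'| ≤ |lam j|)
    (hsimple : Function.Injective lam)
    (X : Matrix (Fin n) (Fin (K + 1)) ℝ)
    (hX : ∀ (i : Fin n) (j : Fin (K + 1)), X i j =
      if h : (j : ℕ) < K then lam ⟨j, h⟩ * ((Gamma g θ P δ d) *ᵥ a ⟨j, h⟩) i else 0) :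
    (∀ i : Fin n, normE (X i) ≠ 0) ∧
      ∀ i i' : Fin n, g i = g i' →
        (fun j => X i j / normE (X i)) = (fun j => X i' j / normE (X i')) := by
  classical
  have hrow : ∀ k : Fin K, ∃ l, 0 < P k l := by
    intro k
    by_contra hc
    push_neg at hc
    exact hPdet (Matrix.det_eq_zero_of_row_eq_zero k
      (fun l => le_antisymm (hc l) (hPnn k l)))
  have hD : ∀ i, 0 < Dvec g θ P i := by
    intro i
    obtain ⟨l, hl⟩ := hrow (g i)
    obtain ⟨j0, hj0⟩ := hg l
    refine Finset.sum_pos' (fun j _ => ?_) ⟨j0, Finset.mem_univ _, ?_⟩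
    · rw [Omega_apply]
      exact mul_nonneg (mul_nonneg (hθ i).le (hPnn _ _)) (hθ j).le
    · rw [Omega_apply, hj0]
      exact mul_pos (mul_pos (hθ i) hl) (hθ j0)
  have hθδ : ∀ i, 0 < thetaDelta g θ P δ d i := by
    intro i
    exact div_pos (mul_pos (hθ i) (hD i)) (by have := hD i; have := mul_pos hδ hd; linarith)
  have hθt : ∀ i, 0 < thetaTilde g θ P δ d i := fun i => Real.sqrt_pos.2 (hθδ i)
  have hN : ∀ k, 0 < normE (thetaTildeK g θ P δ d k) := by
    intro k
    obtain ⟨i0, hi0⟩ := hg k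
    refine Real.sqrt_pos.2 (Finset.sum_pos' (fun i _ => sq_nonneg _)
      ⟨i0, Finset.mem_univ _, ?_⟩)
    unfold thetaTildeK
    rw [if_pos hi0]
    exact pow_pos (hθt i0) 2
  have hnK : Nonempty (Fin K) := ⟨⟨0, hK⟩⟩
  have hnn : Nonempty (Fin n) := ⟨(hg ⟨0, hK⟩).choose⟩
  have hNt : 0 < normE (thetaTilde g θ P δ d) :=
    Real.sqrt_pos.2 (Finset.sum_pos (fun i _ => pow_pos (hθt i) 2) Finset.univ_nonempty)
  have hDP : ∀ k, 0 < DPvec g θ P k := by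
    intro k
    obtain ⟨l, hl⟩ := hrow k
    obtain ⟨j0, hj0⟩ := hg l
    refine Finset.sum_pos' (fun j _ => ?_) ⟨j0, Finset.mem_univ _, ?_⟩
    · rw [PZT_apply]
      exact mul_nonneg (hPnn _ _) (hθ j).le
    · rw [PZT_apply, hj0]
      exact mul_pos hl (hθ j0)
  -- the matrix M is nonsingular
  have hdet1 : (Dtilde g θ P δ d).det ≠ 0 := by
    rw [Dtilde, Matrix.det_diagonal]
    exact Finset.prod_ne_zero_iff.2 fun k _ => ne_of_gt (div_pos (hN k) hNt)
  have hdet2 : (Matrix.diagonal (fun k => (Real.sqrt (DPvec g θ P k))⁻¹)).det ≠ 0 := by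
    rw [Matrix.det_diagonal]
    exact Finset.prod_ne_zero_iff.2
      fun k _ => inv_ne_zero (ne_of_gt (Real.sqrt_pos.2 (hDP k)))
  have hdet3 : (Ptilde g θ P).det ≠ 0 := by
    rw [Ptilde, Matrix.det_mul, Matrix.det_mul]
    exact mul_ne_zero (mul_ne_zero hdet2 hPdet) hdet2
  have hdetM : (Dtilde g θ P δ d * Ptilde g θ P * Dtilde g θ P δ d).det ≠ 0 := by
    rw [Matrix.det_mul, Matrix.det_mul]
    exact mul_ne_zero (mul_ne_zero hdet1 hdet3) hdet1
  have hMinj : ∀ v : Fin K → ℝ,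
      (Dtilde g θ P δ d * Ptilde g θ P * Dtilde g θ P δ d) *ᵥ v = 0 → v = 0 := by
    intro v hv
    have h := congrArg (fun w => (Dtilde g θ P δ d * Ptilde g θ P * Dtilde g θ P δ d)⁻¹ *ᵥ w) hv
    simpa [Matrix.mulVec_mulVec,
      Matrix.nonsing_inv_mul _ (isUnit_iff_ne_zero.2 hdetM)] using h
  have hane : ∀ j, a j ≠ 0 := by
    intro j h
    have := haunit j
    rw [h] at this
    simp [normE] at this
  have hlamne : ∀ j, lam j ≠ 0 := by
    intro j hj
    have h0 : (Dtilde g θ P δ d * Ptilde g θ P * Dtilde g θ P δ d) *ᵥ a j = 0 := by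
      rw [heig j, hj]
      simp
    exact hane j (hMinj _ h0)
  -- linear independence of the eigenvectors
  have hμinj : Function.Injective
      (fun j => lam j / (normE (thetaTilde g θ P δ d)) ^ 2) := by
    intro j j' h
    refine hsimple ?_
    have hc : ((normE (thetaTilde g θ P δ d)) ^ 2)⁻¹ ≠ 0 :=
      inv_ne_zero (ne_of_gt (pow_pos hNt 2))
    have := mul_left_injective₀ hc (by simpa [div_eq_mul_inv] using h)
    exact this
  have hLI : LinearIndependent ℝ a := by
    refine Module.End.eigenvectors_linearIndependent'
      (Matrix.mulVecLin (Dtilde g θ P δ d * Ptilde g θ P * Dtilde g θ P δ d))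
      (fun j => lam j / (normE (thetaTilde g θ P δ d)) ^ 2) hμinj a (fun j => ⟨?_, hane j⟩)
    rw [Module.End.mem_eigenspace_iff, Matrix.mulVecLin_apply]
    exact heig j
  have hcard : Fintype.card (Fin K) = Module.finrank ℝ (Fin K → ℝ) := by
    simp [Module.finrank_fin_fun]
  have hcol : ∀ k, ∃ j, a j k ≠ 0 := by
    intro k
    by_contra hc
    push_neg at hc
    set B := basisOfLinearIndependentOfCardEqFinrank hLI hcard with hBdef
    have hB : ⇑B = a := coe_basisOfLinearIndependentOfCardEqFinrank hLI hcard
    have hrepr := B.sum_repr (Pi.single k (1:ℝ))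
    have h2 := congrFun hrepr k
    rw [Finset.sum_apply] at h2
    simp only [Pi.smul_apply, hB, smul_eq_mul, hc, mul_zero, Finset.sum_const_zero,
      Pi.single_eq_same] at h2
    exact one_ne_zero h2.symm
  -- row structure of X
  set c : Fin n → ℝ :=
    fun i => thetaTilde g θ P δ d i / normE (thetaTildeK g θ P δ d (g i)) with hcdef
  set w : Fin K → Fin (K + 1) → ℝ :=
    fun k j => if h : (j : ℕ) < K then lam ⟨j, h⟩ * a ⟨j, h⟩ k else 0 with hwdef
  have hci : ∀ i, 0 < c i := fun i => div_pos (hθt i) (hN (g i))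
  have hGa : ∀ (j : Fin K) (i : Fin n),
      ((Gamma g θ P δ d) *ᵥ a j) i = c i * a j (g i) := by
    intro j i
    show (∑ k, Gamma g θ P δ d i k * a j k) = _
    rw [Finset.sum_eq_single (g i)]
    · simp [Gamma, thetaTildeK, hcdef]
    · intro b _ hb
      have hz : thetaTildeK g θ P δ d b i = 0 := by
        unfold thetaTildeK
        rw [if_neg (fun h : g i = b => hb h.symm)]
      simp [Gamma, hz]
    · intro h
      exact absurd (Finset.mem_univ _) h
  have hXrow : ∀ i, X i = fun j => c i * w (g i) j := by
    intro i
    funext j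
    rw [hX i j]
    by_cases h : (j : ℕ) < K
    · rw [dif_pos h, hGa, hwdef]
      simp only [dif_pos h]
      ring
    · rw [dif_neg h, hwdef]
      simp only [dif_neg h, mul_zero]
  have hwne : ∀ k, normE (w k) ≠ 0 := by
    intro k h
    rw [normE_eq_zero_iff] at h
    obtain ⟨j, hj⟩ := hcol k
    have h2 := congrFun h (Fin.castSucc j)
    simp only [hwdef, Fin.coe_castSucc, j.isLt, dif_pos, Fin.eta, Pi.zero_apply] at h2
    exact (mul_ne_zero (hlamne j) hj) h2
  have hnormX : ∀ i, normE (X i) = c i * normE (w (g i)) := by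
    intro i
    rw [hXrow i, normE_smul, abs_of_pos (hci i)]
  constructor
  · intro i
    rw [hnormX i]
    exact mul_ne_zero (ne_of_gt (hci i)) (hwne _)
  · intro i i' hgi
    funext j
    have h1 : X i j = c i * w (g i) j := by rw [hXrow i]
    have h2 : X i' j = c i' * w (g i') j := by rw [hXrow i']
    rw [h1, h2, hnormX i, hnormX i', hgi,
      mul_div_mul_left _ _ (ne_of_gt (hci i)), mul_div_mul_left _ _ (ne_of_gt (hci i'))]


end DCSBM
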